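/- Let f ∈ ℂ[[ε_1,…,ε_{n+m}]] be a formal power series, k∉ℚ, and α an odd root. Then s_α f - f lies in the ideal generated by α² if and only if the directional derivative ∂_α f (defined on generators by ∂_α(v)=(α,v)) lies in the ideal generated by α. -/

import Mathlib

open MvPowerSeries Finsupp
set_option linter.unusedSectionVars false

namespace StmtAux
variable {σ : Type*} [DecidableEq σ]

noncomputable def mm (i j : σ) (e : σ →₀ ℕ) (a b : ℕ) : σ →₀ ℕ := (e.update i a).update j b

variable {i j : σ} {e : σ →₀ ℕ} {a b : ℕ}

theorem mm_apply_i (hij : i ≠ j) : mm i j e a b i = a := by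
  simp [mm, Finsupp.coe_update, Function.update_apply, hij]

theorem mm_apply_j : mm i j e a b j = b := by
  simp [mm, Finsupp.coe_update, Function.update_apply]

theorem mm_apply_other {t : σ} (hti : t ≠ i) (htj : t ≠ j) : mm i j e a b t = e t := by
  simp [mm, Finsupp.coe_update, Function.update_apply, hti, htj]

theorem mm_self (hij : i ≠ j) (e : σ →₀ ℕ) : mm i j e (e i) (e j) = e := by
  ext t
  rcases eq_or_ne t i with rfl | hti
  · rw [mm_apply_i hij]
  rcases eq_or_ne t j with rfl | htj
  · rw [mm_apply_j]
  · rw [mm_apply_other hti htj]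

theorem mm_sub_i (hij : i ≠ j) (e : σ →₀ ℕ) (a b : ℕ) :
    mm i j (e - Finsupp.single i 1) a b = mm i j e a b := by
  ext t
  rcases eq_or_ne t i with rfl | hti
  · rw [mm_apply_i hij, mm_apply_i hij]
  rcases eq_or_ne t j with rfl | htj
  · rw [mm_apply_j, mm_apply_j]
  · rw [mm_apply_other hti htj, mm_apply_other hti htj, Finsupp.tsub_apply,
      Finsupp.single_apply, if_neg (Ne.symm hti), Nat.sub_zero]

theorem mm_sub_j (hij : i ≠ j) (e : σ →₀ ℕ) (a b : ℕ) :
    mm i j (e - Finsupp.single j 1) a b = mm i j e a b := by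
  ext t
  rcases eq_or_ne t i with rfl | hti
  · rw [mm_apply_i hij, mm_apply_i hij]
  rcases eq_or_ne t j with rfl | htj
  · rw [mm_apply_j, mm_apply_j]
  · rw [mm_apply_other hti htj, mm_apply_other hti htj, Finsupp.tsub_apply,
      Finsupp.single_apply, if_neg (Ne.symm htj), Nat.sub_zero]

theorem mm_sub_single_i (hij : i ≠ j) (e : σ →₀ ℕ) (a b : ℕ) :
    mm i j e a b - Finsupp.single i 1 = mm i j e (a - 1) b := by
  ext t
  rw [Finsupp.tsub_apply, Finsupp.single_apply]
  rcases eq_or_ne t i with rfl | hti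
  · rw [mm_apply_i hij, mm_apply_i hij, if_pos rfl]
  rcases eq_or_ne t j with rfl | htj
  · rw [mm_apply_j, mm_apply_j, if_neg hij, Nat.sub_zero]
  · rw [mm_apply_other hti htj, mm_apply_other hti htj, if_neg (fun h => hti h.symm),
      Nat.sub_zero]

theorem mm_sub_single_j (hij : i ≠ j) (e : σ →₀ ℕ) (a b : ℕ) :
    mm i j e a b - Finsupp.single j 1 = mm i j e a (b - 1) := by
  ext t
  rw [Finsupp.tsub_apply, Finsupp.single_apply]
  rcases eq_or_ne t i with rfl | hti
  · rw [mm_apply_i hij, mm_apply_i hij, if_neg hij.symm, Nat.sub_zero]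
  rcases eq_or_ne t j with rfl | htj
  · rw [mm_apply_j, mm_apply_j, if_pos rfl]
  · rw [mm_apply_other hti htj, mm_apply_other hti htj, if_neg (fun h => htj h.symm),
      Nat.sub_zero]

noncomputable def Emap (i j : σ) (g : MvPowerSeries σ ℂ) : MvPowerSeries σ ℂ :=
  fun e => if e j = 0 then
    ∑ c ∈ Finset.range (e i + 1), MvPowerSeries.coeff (mm i j e (e i - c) c) g else 0

noncomputable def Qmap (i j : σ) (g : MvPowerSeries σ ℂ) : MvPowerSeries σ ℂ :=
  fun e => ∑ c ∈ Finset.range (e i + 1),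
    MvPowerSeries.coeff (mm i j e (e i - c) (e j + c + 1)) g

theorem coeff_Emap (g : MvPowerSeries σ ℂ) (e : σ →₀ ℕ) :
    MvPowerSeries.coeff e (Emap i j g) = if e j = 0 then
      ∑ c ∈ Finset.range (e i + 1), MvPowerSeries.coeff (mm i j e (e i - c) c) g else 0 := rfl

theorem coeff_Qmap (g : MvPowerSeries σ ℂ) (e : σ →₀ ℕ) :
    MvPowerSeries.coeff e (Qmap i j g) = ∑ c ∈ Finset.range (e i + 1),
      MvPowerSeries.coeff (mm i j e (e i - c) (e j + c + 1)) g := rfl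

theorem coeff_Xmul (i : σ) (g : MvPowerSeries σ ℂ) (e : σ →₀ ℕ) :
    MvPowerSeries.coeff e (X i * g) =
      if 1 ≤ e i then MvPowerSeries.coeff (e - Finsupp.single i 1) g else 0 := by
  rw [X_def, coeff_monomial_mul]
  congr 1
  · rw [eq_iff_iff, Finsupp.single_le_iff]
  · rw [one_mul]

theorem Emap_add (g h : MvPowerSeries σ ℂ) :
    Emap i j (g + h) = Emap i j g + Emap i j h := by
  apply MvPowerSeries.ext; intro e
  simp only [map_add, coeff_Emap, Finset.sum_add_distrib]
  split <;> simp

theorem Qmap_add (g h : MvPowerSeries σ ℂ) :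
    Qmap i j (g + h) = Qmap i j g + Qmap i j h := by
  apply MvPowerSeries.ext; intro e
  simp only [map_add, coeff_Qmap, Finset.sum_add_distrib]

/-- telescoping: `E ((X i - X j) * h) = 0` -/
theorem Emap_alpha_mul (hij : i ≠ j) (h : MvPowerSeries σ ℂ) :
    Emap i j ((X i - X j) * h) = 0 := by
  apply MvPowerSeries.ext; intro e
  rw [coeff_Emap, map_zero]
  split_ifs with hej
  · have key : ∀ c ∈ Finset.range (e i + 1),
        MvPowerSeries.coeff (mm i j e (e i - c) c) ((X i - X j) * h) =
        (if c + 1 ≤ e i then MvPowerSeries.coeff (mm i j e (e i - c - 1) c) h else 0)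
        - (if 1 ≤ c then MvPowerSeries.coeff (mm i j e (e i - c) (c - 1)) h else 0) := by
      intro c hc
      rw [sub_mul, map_sub, coeff_Xmul, coeff_Xmul, mm_apply_i hij, mm_apply_j,
        mm_sub_single_i hij, mm_sub_single_j hij]
      congr 2
      rw [eq_iff_iff]
      omega
    rw [Finset.sum_congr rfl key, Finset.sum_sub_distrib]
    have h1 : ∑ c ∈ Finset.range (e i + 1),
        (if c + 1 ≤ e i then MvPowerSeries.coeff (mm i j e (e i - c - 1) c) h else 0)
        = ∑ c ∈ Finset.range (e i), MvPowerSeries.coeff (mm i j e (e i - c - 1) c) h := by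
      rw [Finset.sum_range_succ, if_neg (by omega : ¬ (e i + 1 ≤ e i))]
      rw [add_zero]
      refine Finset.sum_congr rfl (fun c hc => ?_)
      rw [if_pos (Nat.succ_le_of_lt (Finset.mem_range.mp hc))]
    have h2 : ∑ c ∈ Finset.range (e i + 1),
        (if 1 ≤ c then MvPowerSeries.coeff (mm i j e (e i - c) (c - 1)) h else 0)
        = ∑ c ∈ Finset.range (e i), MvPowerSeries.coeff (mm i j e (e i - c - 1) c) h := by
      rw [Finset.sum_range_succ', if_neg (by omega : ¬ (1:ℕ) ≤ 0), add_zero]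
      refine Finset.sum_congr rfl (fun c hc => ?_)
      have h3 : e i - (c + 1) = e i - c - 1 := by omega
      rw [if_pos (by omega : 1 ≤ c + 1), h3, Nat.add_sub_cancel]
    rw [h1, h2, sub_self]
  · rfl

/-- the division identity `g = E g - (X i - X j) * Q g` -/
theorem decomp (hij : i ≠ j) (g : MvPowerSeries σ ℂ) :
    g = Emap i j g - (X i - X j) * Qmap i j g := by
  apply MvPowerSeries.ext; intro e
  rw [map_sub, sub_mul, map_sub, coeff_Xmul, coeff_Xmul, coeff_Emap]
  rcases eq_or_ne (e j) 0 with hej | hej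
  · rw [if_pos hej, if_neg (show ¬ (1:ℕ) ≤ e j by omega)]
    have hE : ∑ c ∈ Finset.range (e i + 1), MvPowerSeries.coeff (mm i j e (e i - c) c) g
        = (∑ c ∈ Finset.range (e i),
            MvPowerSeries.coeff (mm i j e (e i - c - 1) (c + 1)) g)
          + MvPowerSeries.coeff e g := by
      rw [Finset.sum_range_succ', Nat.sub_zero, ← hej, mm_self hij]
      refine congrArg (· + MvPowerSeries.coeff e g) ?_
      refine Finset.sum_congr rfl (fun c hc => ?_)
      have h3 : e i - (c + 1) = e i - c - 1 := by omega
      rw [h3]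
    rw [hE]
    rcases Nat.eq_zero_or_pos (e i) with hei | hei
    · rw [if_neg (show ¬ (1:ℕ) ≤ e i by omega), hei]
      simp
    · rw [if_pos (show (1:ℕ) ≤ e i from hei)]
      have hQ : MvPowerSeries.coeff (e - Finsupp.single i 1) (Qmap i j g)
          = ∑ c ∈ Finset.range (e i),
              MvPowerSeries.coeff (mm i j e (e i - c - 1) (c + 1)) g := by
        rw [coeff_Qmap]
        have hi' : (e - Finsupp.single i 1 : σ →₀ ℕ) i = e i - 1 := by
          rw [Finsupp.tsub_apply, Finsupp.single_apply, if_pos rfl]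
        have hj' : (e - Finsupp.single i 1 : σ →₀ ℕ) j = 0 := by
          rw [Finsupp.tsub_apply, Finsupp.single_apply, if_neg hij, hej, Nat.sub_zero]
        rw [hi', hj']
        have h4 : e i - 1 + 1 = e i := by omega
        rw [h4]
        refine Finset.sum_congr rfl (fun c hc => ?_)
        rw [mm_sub_i hij]
        have h5 : e i - 1 - c = e i - c - 1 := by omega
        rw [h5, Nat.zero_add]
      rw [hQ]; ring
  · rw [if_neg hej, if_pos (show (1:ℕ) ≤ e j by omega)]
    have hQj : MvPowerSeries.coeff (e - Finsupp.single j 1) (Qmap i j g)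
        = MvPowerSeries.coeff e g + ∑ c ∈ Finset.range (e i),
            MvPowerSeries.coeff (mm i j e (e i - c - 1) (e j + c + 1)) g := by
      rw [coeff_Qmap]
      have hi' : (e - Finsupp.single j 1 : σ →₀ ℕ) i = e i := by
        rw [Finsupp.tsub_apply, Finsupp.single_apply, if_neg (fun h => hij h.symm),
          Nat.sub_zero]
      have hj' : (e - Finsupp.single j 1 : σ →₀ ℕ) j = e j - 1 := by
        rw [Finsupp.tsub_apply, Finsupp.single_apply, if_pos rfl]
      rw [hi', hj']
      have key : ∀ c ∈ Finset.range (e i + 1),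
          MvPowerSeries.coeff (mm i j (e - Finsupp.single j 1) (e i - c) (e j - 1 + c + 1)) g
          = MvPowerSeries.coeff (mm i j e (e i - c) (e j + c)) g := by
        intro c hc
        rw [mm_sub_j hij]
        have h6 : e j - 1 + c + 1 = e j + c := by omega
        rw [h6]
      rw [Finset.sum_congr rfl key, Finset.sum_range_succ']
      have h7 : ∀ c, e i - (c + 1) = e i - c - 1 := fun c => by omega
      have h8 : ∀ c, e j + (c + 1) = e j + c + 1 := fun c => by omega
      rw [Nat.sub_zero, Nat.add_zero, mm_self hij, add_comm]
      refine congrArg (MvPowerSeries.coeff e g + ·) ?_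
      refine Finset.sum_congr rfl (fun c hc => ?_)
      rw [h7, h8]
    rw [hQj]
    rcases Nat.eq_zero_or_pos (e i) with hei | hei
    · rw [if_neg (show ¬ (1:ℕ) ≤ e i by omega), hei]
      simp
    · rw [if_pos (show (1:ℕ) ≤ e i from hei)]
      have hQi : MvPowerSeries.coeff (e - Finsupp.single i 1) (Qmap i j g)
          = ∑ c ∈ Finset.range (e i),
              MvPowerSeries.coeff (mm i j e (e i - c - 1) (e j + c + 1)) g := by
        rw [coeff_Qmap]
        have hi' : (e - Finsupp.single i 1 : σ →₀ ℕ) i = e i - 1 := by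
          rw [Finsupp.tsub_apply, Finsupp.single_apply, if_pos rfl]
        have hj' : (e - Finsupp.single i 1 : σ →₀ ℕ) j = e j := by
          rw [Finsupp.tsub_apply, Finsupp.single_apply, if_neg hij, Nat.sub_zero]
        rw [hi', hj']
        have h4 : e i - 1 + 1 = e i := by omega
        rw [h4]
        refine Finset.sum_congr rfl (fun c hc => ?_)
        rw [mm_sub_i hij]
        have h5 : e i - 1 - c = e i - c - 1 := by omega
        rw [h5]
      rw [hQi]; ring

section Deg
variable [Fintype σ]

/-- total degree of a monomial -/
def deg (d : σ →₀ ℕ) : ℕ := ∑ t, d t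

theorem deg_add (d e : σ →₀ ℕ) : deg (d + e) = deg d + deg e := by
  simp [deg, Finset.sum_add_distrib]

theorem deg_eq_zero {d : σ →₀ ℕ} (h : deg d = 0) : d = 0 := by
  ext t
  have := Finset.sum_eq_zero_iff.mp h t (Finset.mem_univ t)
  simpa using this

theorem deg_zero : deg (0 : σ →₀ ℕ) = 0 := by simp [deg]

theorem deg_single (t : σ) : deg (Finsupp.single t 1) = 1 := by
  rw [deg, Finset.sum_eq_single t]
  · rw [Finsupp.single_apply, if_pos rfl]
  · intro b _ hb
    rw [Finsupp.single_apply, if_neg (fun h => hb h.symm)]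
  · intro h
    exact absurd (Finset.mem_univ t) h

theorem deg_mm (hij : i ≠ j) (e : σ →₀ ℕ) (a b : ℕ) :
    deg (mm i j e a b) + e i + e j = deg e + a + b := by
  have key : ∀ t, mm i j e a b t + ((if t = i then e i else 0) + if t = j then e j else 0)
      = e t + ((if t = i then a else 0) + if t = j then b else 0) := by
    intro t
    rcases eq_or_ne t i with rfl | hti
    · rw [mm_apply_i hij, if_pos rfl, if_pos rfl, if_neg hij, if_neg hij]; ring
    rcases eq_or_ne t j with rfl | htj
    · rw [mm_apply_j, if_neg (Ne.symm hij), if_pos rfl, if_neg (Ne.symm hij), if_pos rfl]; ring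
    · rw [mm_apply_other hti htj, if_neg hti, if_neg htj, if_neg hti, if_neg htj]
  have := Finset.sum_congr rfl (fun t (_ : t ∈ Finset.univ) => key t)
  simp only [Finset.sum_add_distrib, Finset.sum_ite_eq' Finset.univ, Finset.mem_univ,
    if_pos] at this
  simpa [deg, add_assoc] using this

/-- coefficients vanish below total degree `N` -/
def Osmall (N : ℕ) (f : MvPowerSeries σ ℂ) : Prop :=
  ∀ d : σ →₀ ℕ, deg d < N → MvPowerSeries.coeff d f = 0

theorem Osmall_mono {M N : ℕ} (h : M ≤ N) {f : MvPowerSeries σ ℂ} (hf : Osmall N f) :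
    Osmall M f := fun d hd => hf d (by omega)

theorem Osmall_zero' {f : MvPowerSeries σ ℂ} : Osmall 0 f := fun d hd => absurd hd (by omega)

theorem Osmall_add {N : ℕ} {f g : MvPowerSeries σ ℂ} (hf : Osmall N f) (hg : Osmall N g) :
    Osmall N (f + g) := fun d hd => by rw [map_add, hf d hd, hg d hd, add_zero]

theorem Osmall_sub {N : ℕ} {f g : MvPowerSeries σ ℂ} (hf : Osmall N f) (hg : Osmall N g) :
    Osmall N (f - g) := fun d hd => by rw [map_sub, hf d hd, hg d hd, sub_zero]

theorem Osmall_sum {N : ℕ} {ι : Type*} {s : Finset ι} {g : ι → MvPowerSeries σ ℂ}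
    (h : ∀ x ∈ s, Osmall N (g x)) : Osmall N (∑ x ∈ s, g x) := fun d hd => by
  rw [map_sum]
  exact Finset.sum_eq_zero (fun x hx => h x hx d hd)

theorem Osmall_mul {a b : ℕ} {f g : MvPowerSeries σ ℂ} (hf : Osmall a f) (hg : Osmall b g) :
    Osmall (a + b) (f * g) := by
  intro d hd
  rw [coeff_mul]
  refine Finset.sum_eq_zero (fun p hp => ?_)
  replace hp : p.1 + p.2 = d := by simpa using hp
  have hdeg : deg p.1 + deg p.2 = deg d := by rw [← deg_add, hp]
  rcases (show deg p.1 < a ∨ deg p.2 < b by omega) with h | h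
  · rw [hf p.1 h, zero_mul]
  · rw [hg p.2 h, mul_zero]

theorem Osmall_X (t : σ) : Osmall 1 (X t : MvPowerSeries σ ℂ) := by
  intro d hd
  have : d = 0 := deg_eq_zero (by omega)
  rw [this]
  exact coeff_zero_X t

theorem Osmall_Emap (hij : i ≠ j) {N : ℕ} {g : MvPowerSeries σ ℂ} (hg : Osmall N g) :
    Osmall N (Emap i j g) := by
  intro d hd
  rw [coeff_Emap]
  split_ifs with hdj
  · refine Finset.sum_eq_zero (fun c hc => ?_)
    have hc' : c ≤ d i := Nat.lt_succ_iff.mp (Finset.mem_range.mp hc)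
    apply hg
    have := deg_mm hij d (d i - c) c
    omega
  · rfl

theorem Osmall_Qmap (hij : i ≠ j) {N : ℕ} {g : MvPowerSeries σ ℂ} (hg : Osmall (N + 1) g) :
    Osmall N (Qmap i j g) := by
  intro d hd
  rw [coeff_Qmap]
  refine Finset.sum_eq_zero (fun c hc => ?_)
  have hc' : c ≤ d i := Nat.lt_succ_iff.mp (Finset.mem_range.mp hc)
  apply hg
  have := deg_mm hij d (d i - c) (d j + c + 1)
  omega

end Deg

section Split
variable [Fintype σ] [LinearOrder σ]

/-- the part of `f` whose monomials have smallest variable `t`, divided by `X t` -/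
noncomputable def split (t : σ) (f : MvPowerSeries σ ℂ) : MvPowerSeries σ ℂ :=
  fun e => if ∀ s, s < t → e s = 0 then MvPowerSeries.coeff (e + Finsupp.single t 1) f else 0

theorem coeff_split (t : σ) (f : MvPowerSeries σ ℂ) (e : σ →₀ ℕ) :
    MvPowerSeries.coeff e (split t f) =
      if ∀ s, s < t → e s = 0 then MvPowerSeries.coeff (e + Finsupp.single t 1) f else 0 := rfl

theorem Osmall_split {N : ℕ} (t : σ) {f : MvPowerSeries σ ℂ} (hf : Osmall (N + 1) f) :
    Osmall N (split t f) := by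
  intro d hd
  rw [coeff_split]
  split_ifs with h
  · apply hf
    rw [deg_add, deg_single]
    omega
  · rfl

theorem sum_split (f : MvPowerSeries σ ℂ) (hf : MvPowerSeries.coeff 0 f = 0) :
    f = ∑ t, X t * split t f := by
  apply MvPowerSeries.ext; intro e
  rw [map_sum]
  have key : ∀ t, MvPowerSeries.coeff e (X t * split t f)
      = if 1 ≤ e t ∧ (∀ s, s < t → e s = 0) then MvPowerSeries.coeff e f else 0 := by
    intro t
    rw [coeff_Xmul]
    by_cases h1 : 1 ≤ e t
    · rw [if_pos h1, coeff_split]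
      have hsub : ∀ s, s < t → ((e - Finsupp.single t 1 : σ →₀ ℕ) s = e s) := by
        intro s hs
        rw [Finsupp.tsub_apply, Finsupp.single_apply, if_neg (fun h => (ne_of_lt hs) h.symm),
          Nat.sub_zero]
      have harg : (e - Finsupp.single t 1) + Finsupp.single t 1 = e :=
        tsub_add_cancel_of_le (Finsupp.single_le_iff.mpr h1)
      by_cases h2 : ∀ s, s < t → e s = 0
      · rw [if_pos (fun s hs => by rw [hsub s hs]; exact h2 s hs), harg, if_pos ⟨h1, h2⟩]
      · rw [if_neg (fun hc => h2 (fun s hs => by rw [← hsub s hs]; exact hc s hs)),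
          if_neg (fun hc => h2 hc.2)]
    · rw [if_neg h1, if_neg (fun hc => h1 hc.1)]
  rw [Finset.sum_congr rfl (fun t _ => key t)]
  rcases eq_or_ne e 0 with rfl | he
  · rw [hf]
    refine (Finset.sum_eq_zero (fun t _ => ?_)).symm
    rw [if_neg]
    rintro ⟨h1, -⟩
    simp at h1
  · have hne : e.support.Nonempty := Finsupp.support_nonempty_iff.mpr he
    set t₀ := e.support.min' hne with ht₀
    have hmem : t₀ ∈ e.support := Finset.min'_mem _ hne
    have ht0 : 1 ≤ e t₀ := Nat.one_le_iff_ne_zero.mpr (Finsupp.mem_support_iff.mp hmem)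
    have hlt : ∀ s, s < t₀ → e s = 0 := by
      intro s hs
      by_contra hse
      exact absurd (Finset.min'_le _ s (Finsupp.mem_support_iff.mpr hse)) (not_le.mpr hs)
    have hiff : ∀ t, (1 ≤ e t ∧ ∀ s, s < t → e s = 0) ↔ t = t₀ := by
      intro t
      constructor
      · rintro ⟨h1, h2⟩
        have h3 : t₀ ≤ t := Finset.min'_le _ t (Finsupp.mem_support_iff.mpr (by omega))
        rcases eq_or_lt_of_le h3 with h4 | h4
        · exact h4.symm
        · exact absurd (h2 t₀ h4) (by omega)
      · rintro rfl
        exact ⟨ht0, hlt⟩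
    calc MvPowerSeries.coeff e f
        = if t₀ ∈ Finset.univ then MvPowerSeries.coeff e f else 0 := by
          rw [if_pos (Finset.mem_univ _)]
      _ = ∑ t, if t = t₀ then MvPowerSeries.coeff e f else 0 := by
          rw [Finset.sum_ite_eq' Finset.univ t₀ (fun _ => MvPowerSeries.coeff e f)]
      _ = _ := by
          refine Finset.sum_congr rfl (fun t _ => ?_)
          exact (if_congr (hiff t) rfl rfl).symm

theorem approx (S : Set (MvPowerSeries σ ℂ))
    (hC : ∀ a : ℂ, C (σ := σ) (R := ℂ) a ∈ S) (hX : ∀ t, (X t : MvPowerSeries σ ℂ) ∈ S)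
    (hadd : ∀ {x y}, x ∈ S → y ∈ S → x + y ∈ S)
    (hmul : ∀ {x y}, x ∈ S → y ∈ S → x * y ∈ S) :
    ∀ (N : ℕ) (f : MvPowerSeries σ ℂ), ∃ P ∈ S, Osmall N (f - P) := by
  intro N
  induction N with
  | zero =>
      intro f
      exact ⟨C (σ := σ) (R := ℂ) 0, hC 0, Osmall_zero'⟩
  | succ N ih =>
      intro f
      set f1 := f - C (σ := σ) (R := ℂ) (MvPowerSeries.coeff 0 f) with hf1
      have h0 : MvPowerSeries.coeff 0 f1 = 0 := by
        rw [hf1, map_sub, MvPowerSeries.coeff_zero_C, sub_self]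
      choose P hP hOP using fun t => ih (split t f1)
      refine ⟨C (σ := σ) (R := ℂ) (MvPowerSeries.coeff 0 f) + ∑ t, X t * P t, ?_, ?_⟩
      · refine hadd (hC _) ?_
        refine Finset.sum_induction _ (· ∈ S) (fun a b ha hb => hadd ha hb) ?_
          (fun t _ => hmul (hX t) (hP t))
        simpa using hC 0
      · have hsum : f - (C (σ := σ) (R := ℂ) (MvPowerSeries.coeff 0 f) + ∑ t, X t * P t)
            = ∑ t, X t * (split t f1 - P t) := by
          have h2 : ∑ t, X t * (split t f1 - P t)
              = (∑ t, X t * split t f1) - ∑ t, X t * P t := by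
            rw [← Finset.sum_sub_distrib]
            exact Finset.sum_congr rfl (fun t _ => by ring)
          rw [h2, ← sum_split f1 h0, hf1]
          ring
        rw [hsum]
        refine Osmall_sum (fun t _ => ?_)
        have := Osmall_mul (Osmall_X t) (hOP t)
        rwa [add_comm] at this

theorem Osmall_algHom (sA : MvPowerSeries σ ℂ →ₐ[ℂ] MvPowerSeries σ ℂ)
    (h1 : ∀ t, Osmall 1 (sA (X t))) :
    ∀ (N : ℕ) (f : MvPowerSeries σ ℂ), Osmall N f → Osmall N (sA f) := by
  intro N
  induction N with
  | zero => intro f _; exact Osmall_zero'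
  | succ N ih =>
      intro f hf
      have h0 : MvPowerSeries.coeff 0 f = 0 := hf 0 (by rw [deg_zero]; omega)
      rw [sum_split f h0, map_sum]
      refine Osmall_sum (fun t _ => ?_)
      rw [map_mul]
      have := Osmall_mul (h1 t) (ih (split t f) (Osmall_split t hf))
      rwa [add_comm] at this

theorem Osmall_deriv (D : Derivation ℂ (MvPowerSeries σ ℂ) (MvPowerSeries σ ℂ)) :
    ∀ (N : ℕ) (f : MvPowerSeries σ ℂ), Osmall (N + 1) f → Osmall N (D f) := by
  intro N
  induction N with
  | zero => intro f _; exact Osmall_zero'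
  | succ N ih =>
      intro f hf
      have h0 : MvPowerSeries.coeff 0 f = 0 := hf 0 (by rw [deg_zero]; omega)
      rw [sum_split f h0, map_sum]
      refine Osmall_sum (fun t _ => ?_)
      rw [Derivation.leibniz, smul_eq_mul, smul_eq_mul]
      refine Osmall_add ?_ ?_
      · have := Osmall_mul (Osmall_X t) (ih (split t f) (Osmall_split t hf))
        rwa [add_comm] at this
      · have hs : Osmall (N + 1) (split t f) := Osmall_split t hf
        have := Osmall_mul hs (Osmall_zero' (f := D (X t)))
        rwa [add_zero] at this
  
end Split

section Closure
variable [Fintype σ] {i j : σ}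

theorem alpha_ne_zero (hij : i ≠ j) : (X i - X j : MvPowerSeries σ ℂ) ≠ 0 := by
  intro h
  have := congrArg (MvPowerSeries.coeff (Finsupp.single i 1)) h
  rw [map_sub, coeff_index_single_self_X, coeff_index_single_X, if_neg hij, map_zero] at this
  norm_num at this

theorem closure1 (hij : i ≠ j) (g : MvPowerSeries σ ℂ)
    (H : ∀ N : ℕ, ∃ w h : MvPowerSeries σ ℂ, g = (X i - X j) * w + h ∧ Osmall N h) :
    (X i - X j) ∣ g := by
  have hE : Emap i j g = 0 := by
    apply MvPowerSeries.ext; intro e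
    rw [map_zero]
    obtain ⟨w, h, rfl, hh⟩ := H (deg e + 1)
    rw [Emap_add, map_add, Emap_alpha_mul hij, map_zero, zero_add]
    exact Osmall_Emap hij hh e (by omega)
  have hd := decomp hij g
  rw [hE, zero_sub] at hd
  exact ⟨-Qmap i j g, by rw [mul_neg, ← hd]⟩

theorem Qmap_alpha_alpha (hij : i ≠ j) (w : MvPowerSeries σ ℂ) :
    Qmap i j ((X i - X j) * ((X i - X j) * w)) = -((X i - X j) * w) := by
  have h1 := decomp hij ((X i - X j) * ((X i - X j) * w))
  rw [Emap_alpha_mul hij, zero_sub] at h1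
  have h2 : (X i - X j) * ((X i - X j) * w)
      = (X i - X j) * (-(Qmap i j ((X i - X j) * ((X i - X j) * w)))) := by
    rw [mul_neg, ← h1]
  have h3 := mul_left_cancel₀ (alpha_ne_zero hij) h2
  have h4 := congrArg Neg.neg h3
  rw [neg_neg] at h4
  exact h4.symm

theorem closure2 (hij : i ≠ j) (g : MvPowerSeries σ ℂ)
    (H : ∀ N : ℕ, ∃ w h : MvPowerSeries σ ℂ,
      g = (X i - X j) * ((X i - X j) * w) + h ∧ Osmall N h) :
    (X i - X j) * (X i - X j) ∣ g := by
  have hE : Emap i j g = 0 := by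
    apply MvPowerSeries.ext; intro e
    rw [map_zero]
    obtain ⟨w, h, rfl, hh⟩ := H (deg e + 1)
    rw [Emap_add, map_add, Emap_alpha_mul hij, map_zero, zero_add]
    exact Osmall_Emap hij hh e (by omega)
  have hEQ : Emap i j (Qmap i j g) = 0 := by
    apply MvPowerSeries.ext; intro e
    rw [map_zero]
    obtain ⟨w, h, rfl, hh⟩ := H (deg e + 2)
    rw [Qmap_add, Emap_add, map_add, Qmap_alpha_alpha hij w]
    have hneg : -((X i - X j) * w) = (X i - X j) * (-w) := by ring
    rw [hneg, Emap_alpha_mul hij, map_zero, zero_add]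
    have hQ : Osmall (deg e + 1) (Qmap i j h) := Osmall_Qmap hij hh
    exact Osmall_Emap hij hQ e (by omega)
  have h1 := decomp hij g
  rw [hE, zero_sub] at h1
  have h2 := decomp hij (Qmap i j g)
  rw [hEQ, zero_sub] at h2
  refine ⟨Qmap i j (Qmap i j g), ?_⟩
  conv_lhs => rw [h1, h2]
  ring

end Closure
end StmtAux

open StmtAux in
/-- For a formal power series `f`, `k ∉ ℚ`, and an odd root `α = ε_i - ε_j`,
`s_α f - f` lies in the ideal `(α²)` iff `∂_α f` lies in the ideal `(α)`. -/
theorem stmt_2 (n m : ℕ) (k : ℂ) (hk : ∀ q : ℚ, (q : ℂ) ≠ k)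
    (p : Fin (n + m) → ℕ) (hp : ∀ t, p t = if (t : ℕ) < n then 0 else 1)
    (i j : Fin (n + m)) (hij : i ≠ j) (hodd : p i + p j = 1)
    -- `α = ε_i - ε_j` as a (degree one) formal power series
    (α : MvPowerSeries (Fin (n + m)) ℂ)
    (hα : α = MvPowerSeries.X i - MvPowerSeries.X j)
    -- the reflection `s_α` acting on power series, as a ℂ-algebra endomorphism
    -- determined by its action on the generators `ε_t`
    (sA : MvPowerSeries (Fin (n + m)) ℂ →ₐ[ℂ] MvPowerSeries (Fin (n + m)) ℂ)
    (hsA : ∀ t, sA (MvPowerSeries.X t) = MvPowerSeries.X t -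
      (MvPowerSeries.C (σ := Fin (n + m)) (R := ℂ))
        (2 * ((if t = i then k ^ p i else 0) - (if t = j then k ^ p j else 0)) / (1 + k)) * α)
    -- the derivation `∂_α` determined by `∂_α(ε_t) = (α, ε_t)`
    (D : Derivation ℂ (MvPowerSeries (Fin (n + m)) ℂ) (MvPowerSeries (Fin (n + m)) ℂ))
    (hD : ∀ t, D (MvPowerSeries.X t) = (MvPowerSeries.C (σ := Fin (n + m)) (R := ℂ))
      ((if t = i then k ^ p i else 0) - (if t = j then k ^ p j else 0)))
    (f : MvPowerSeries (Fin (n + m)) ℂ) :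
    sA f - f ∈ Ideal.span {α ^ 2} ↔ D f ∈ Ideal.span {α} := by
  subst hα
  have h1k : (1 : ℂ) + k ≠ 0 := by
    intro h
    apply hk (-1)
    push_cast
    linear_combination -h
  -- abbreviations
  set C' : ℂ →+* MvPowerSeries (Fin (n + m)) ℂ := MvPowerSeries.C (σ := Fin (n + m)) (R := ℂ) with hC'
  set dd : Fin (n + m) → ℂ :=
    fun t => (if t = i then k ^ p i else 0) - (if t = j then k ^ p j else 0) with hdd
  -- the set of `f` for which both key divisibilities hold
  set S : Set (MvPowerSeries (Fin (n + m)) ℂ) :=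
    {f0 | (X i - X j) ∣ (sA f0 - f0) ∧
      (X i - X j) * (X i - X j) ∣
        (C' (1 + k) * (sA f0 - f0) + C' 2 * ((X i - X j) * D f0))} with hSdef
  have hCmem : ∀ a : ℂ, C' a ∈ S := by
    intro a
    have hsAC : sA (C' a) = C' a := by
      rw [hC', MvPowerSeries.c_eq_algebraMap]
      exact sA.commutes a
    have hDC : D (C' a) = 0 := by
      rw [hC', MvPowerSeries.c_eq_algebraMap]
      exact D.map_algebraMap a
    refine ⟨?_, ?_⟩
    · rw [hsAC, sub_self]
      exact dvd_zero _
    · rw [hsAC, hDC, sub_self, mul_zero, mul_zero, mul_zero, add_zero]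
      exact dvd_zero _
  have hXmem : ∀ t, (X t : MvPowerSeries (Fin (n + m)) ℂ) ∈ S := by
    intro t
    have hsA' : sA (X t) = X t - C' (2 * dd t / (1 + k)) * (X i - X j) := hsA t
    have hD' : D (X t) = C' (dd t) := hD t
    refine ⟨⟨-(C' (2 * dd t / (1 + k))), by rw [hsA']; ring⟩, ?_⟩
    have key : C' (1 + k) * (sA (X t) - X t) + C' 2 * ((X i - X j) * D (X t))
        = (C' 2 * C' (dd t) - C' (1 + k) * C' (2 * dd t / (1 + k))) * (X i - X j) := by
      rw [hsA', hD']; ring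
    have harith : (2 : ℂ) * dd t - (1 + k) * (2 * dd t / (1 + k)) = 0 := by
      field_simp
      ring
    rw [key, ← map_mul, ← map_mul, ← map_sub, harith, map_zero, zero_mul]
    exact dvd_zero _
  have haddmem : ∀ {x y : MvPowerSeries (Fin (n + m)) ℂ}, x ∈ S → y ∈ S → x + y ∈ S := by
    intro x y hx hy
    refine ⟨?_, ?_⟩
    · have hid : sA (x + y) - (x + y) = (sA x - x) + (sA y - y) := by
        rw [map_add]; ring
      rw [hid]
      exact dvd_add hx.1 hy.1
    · have hid : C' (1 + k) * (sA (x + y) - (x + y)) + C' 2 * ((X i - X j) * D (x + y))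
          = (C' (1 + k) * (sA x - x) + C' 2 * ((X i - X j) * D x))
            + (C' (1 + k) * (sA y - y) + C' 2 * ((X i - X j) * D y)) := by
        rw [map_add sA, map_add D]; ring
      rw [hid]
      exact dvd_add hx.2 hy.2
  have hmulmem : ∀ {x y : MvPowerSeries (Fin (n + m)) ℂ}, x ∈ S → y ∈ S → x * y ∈ S := by
    intro x y hx hy
    obtain ⟨u, hu⟩ := hx.1
    have hDmul : D (x * y) = x * D y + y * D x := by
      rw [Derivation.leibniz, smul_eq_mul, smul_eq_mul]
    refine ⟨?_, ?_⟩
    · have hid : sA (x * y) - x * y = sA x * (sA y - y) + (sA x - x) * y := by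
        rw [map_mul]; ring
      rw [hid]
      exact dvd_add (hy.1.mul_left _) (hx.1.mul_right _)
    · have hid : C' (1 + k) * (sA (x * y) - x * y) + C' 2 * ((X i - X j) * D (x * y))
          = sA x * (C' (1 + k) * (sA y - y) + C' 2 * ((X i - X j) * D y))
            + (C' (1 + k) * (sA x - x) + C' 2 * ((X i - X j) * D x)) * y
            + (X i - X j) * (X i - X j) * (-(C' 2 * (u * D y))) := by
        rw [map_mul, hDmul]
        linear_combination (-(C' 2 * (X i - X j) * D y)) * hu
      rw [hid]
      exact dvd_add (dvd_add (hy.2.mul_left _) (hx.2.mul_right _)) (dvd_mul_right _ _)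
  have happrox := approx S hCmem hXmem haddmem hmulmem
  have hsA1 : ∀ t, Osmall 1 (sA (X t)) := by
    intro t d hd
    have hd0 : d = 0 := deg_eq_zero (by omega)
    subst hd0
    rw [hsA t, map_sub, coeff_zero_X, MvPowerSeries.coeff_C_mul, map_sub, coeff_zero_X,
      coeff_zero_X]
    ring
  have halpha1 : Osmall 1 (X i - X j : MvPowerSeries (Fin (n + m)) ℂ) :=
    Osmall_sub (Osmall_X i) (Osmall_X j)
  have hW : (X i - X j) * (X i - X j) ∣
      (C' (1 + k) * (sA f - f) + C' 2 * ((X i - X j) * D f)) := by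
    apply closure2 hij
    intro N
    obtain ⟨P, hPS, hO⟩ := happrox (N + 2) f
    obtain ⟨w, hw⟩ := hPS.2
    refine ⟨w, C' (1 + k) * (sA f - f) + C' 2 * ((X i - X j) * D f)
      - (X i - X j) * ((X i - X j) * w), by ring, ?_⟩
    have he : C' (1 + k) * (sA f - f) + C' 2 * ((X i - X j) * D f)
          - (X i - X j) * ((X i - X j) * w)
        = C' (1 + k) * (sA (f - P) - (f - P)) + C' 2 * ((X i - X j) * D (f - P)) := by
      rw [map_sub sA, Derivation.map_sub]
      linear_combination hw
    rw [he]
    have h1 : Osmall (N + 2) (sA (f - P) - (f - P)) :=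
      Osmall_sub (Osmall_algHom sA hsA1 (N + 2) _ hO) hO
    have h2 : Osmall (N + 1) (D (f - P)) := Osmall_deriv D (N + 1) _ hO
    exact Osmall_add
      (Osmall_mono (by omega) (Osmall_mul (Osmall_zero' (f := C' (1 + k))) h1))
      (Osmall_mono (by omega) (Osmall_mul (Osmall_zero' (f := C' 2)) (Osmall_mul halpha1 h2)))
  -- final assembly
  rw [Ideal.mem_span_singleton, Ideal.mem_span_singleton, pow_two]
  obtain ⟨w, hw⟩ := hW
  constructor
  · rintro ⟨v, hv⟩
    have hc : (X i - X j) * (C' 2 * D f)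
        = (X i - X j) * ((X i - X j) * (w - C' (1 + k) * v)) := by
      linear_combination hw - C' (1 + k) * hv
    have h2 := mul_left_cancel₀ (alpha_ne_zero hij) hc
    refine ⟨C' 2⁻¹ * (w - C' (1 + k) * v), ?_⟩
    calc D f = C' 2⁻¹ * (C' 2 * D f) := by
          rw [← mul_assoc, ← map_mul, show (2⁻¹ * 2 : ℂ) = 1 by norm_num, map_one, one_mul]
      _ = _ := by rw [h2]; ring
  · rintro ⟨z, hz⟩
    have hc : C' (1 + k) * (sA f - f)
        = (X i - X j) * ((X i - X j) * (w - C' 2 * z)) := by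
      linear_combination hw - C' 2 * (X i - X j) * hz
    refine ⟨C' (1 + k)⁻¹ * (w - C' 2 * z), ?_⟩
    calc sA f - f = C' (1 + k)⁻¹ * (C' (1 + k) * (sA f - f)) := by
          rw [← mul_assoc, ← map_mul, inv_mul_cancel₀ h1k, map_one, one_mul]
      _ = _ := by rw [hc]; ring
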